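/- Let 1 < p < N, q > p-1, and θ = -p(N-1)/(p-1) (so θ + p < 0). Set d = ((p-1)(q-p+1)/(p(N-p))) · (p/((p-1)(q+1)))^{1/p}. Then for every c > 0, the function u(r) = (c + d r^{(p-N)/(p-1)})^{-p/(q+1-p)} is a positive solution on (0,∞) of the radial equation -(|u'|^{p-2}u')' - ((N-1)/r)|u'|^{p-2}u' + r^θ u^q = 0. -/

import Mathlib

theorem stmt12 (p N q : ℝ) (hp : 1 < p) (hpN : p < N) (hq : p - 1 < q)
    (θ d : ℝ) (hθ : θ = -p * (N - 1) / (p - 1))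
    (hd : d = (p - 1) * (q - p + 1) / (p * (N - p)) * (p / ((p - 1) * (q + 1))) ^ (1 / p))
    (c : ℝ) (hc : 0 < c)
    (u : ℝ → ℝ)
    (hu : ∀ r : ℝ, u r = (c + d * r ^ ((p - N) / (p - 1))) ^ (-p / (q + 1 - p))) :
    ∀ r : ℝ, 0 < r →
      0 < u r ∧
      -(deriv (fun s : ℝ => Real.sign (deriv u s) * |deriv u s| ^ (p - 1)) r)
        - ((N - 1) / r) * (Real.sign (deriv u r) * |deriv u r| ^ (p - 1))
        + r ^ θ * u r ^ q = 0 := by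
  have hp0 : 0 < p := lt_trans one_pos hp
  have hp1 : 0 < p - 1 := sub_pos.mpr hp
  have hNp : 0 < N - p := sub_pos.mpr hpN
  have hqp : 0 < q + 1 - p := by linarith
  have hq1 : 0 < q + 1 := by linarith
  set d0 : ℝ := (p - 1) * (q - p + 1) / (p * (N - p)) with hd0
  set m : ℝ := p / ((p - 1) * (q + 1)) with hm
  have hm0 : 0 < m := div_pos hp0 (mul_pos hp1 hq1)
  have hd00 : 0 < d0 := div_pos (mul_pos hp1 (by linarith)) (mul_pos hp0 hNp)
  set α : ℝ := (p - N) / (p - 1) with hα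
  have hα0 : α < 0 := div_neg_of_neg_of_pos (by linarith) hp1
  set β : ℝ := -p / (q + 1 - p) with hβ
  have hβ0 : β < 0 := div_neg_of_neg_of_pos (by linarith) hqp
  have hdpos : 0 < d := by
    rw [hd]; exact mul_pos hd00 (Real.rpow_pos_of_pos hm0 _)
  set γ : ℝ := (β - 1) * (p - 1) with hγ
  set K : ℝ := d * α * β with hK
  have hKpos : 0 < K := by
    have := mul_neg_of_pos_of_neg hdpos hα0
    exact mul_pos_of_neg_of_neg this hβ0
  -- replace u by the explicit function
  have hufun : u = fun s : ℝ => (c + d * s ^ α) ^ β := funext hu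
  subst hufun
  intro r hr
  have hA : ∀ s : ℝ, 0 < s → 0 < c + d * s ^ α := fun s hs => by
    have := Real.rpow_pos_of_pos hs α
    positivity
  have hAr : 0 < c + d * r ^ α := hA r hr
  -- derivative of u
  have hderivu : ∀ s : ℝ, 0 < s →
      HasDerivAt (fun x : ℝ => (c + d * x ^ α) ^ β)
        (d * (α * s ^ (α - 1)) * β * (c + d * s ^ α) ^ (β - 1)) s := by
    intro s hs
    have h1 : HasDerivAt (fun x : ℝ => c + d * x ^ α) (d * (α * s ^ (α - 1))) s :=
      ((Real.hasDerivAt_rpow_const (Or.inl (ne_of_gt hs))).const_mul d).const_add c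
    exact h1.rpow_const (Or.inl (ne_of_gt (hA s hs)))
  have hDval : ∀ s : ℝ, 0 < s →
      deriv (fun x : ℝ => (c + d * x ^ α) ^ β) s
        = d * (α * s ^ (α - 1)) * β * (c + d * s ^ α) ^ (β - 1) := fun s hs =>
    (hderivu s hs).deriv
  have hDpos : ∀ s : ℝ, 0 < s →
      0 < d * (α * s ^ (α - 1)) * β * (c + d * s ^ α) ^ (β - 1) := by
    intro s hs
    have h1 : 0 < s ^ (α - 1) := Real.rpow_pos_of_pos hs _
    have h2 : 0 < (c + d * s ^ α) ^ (β - 1) := Real.rpow_pos_of_pos (hA s hs) _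
    have h3 : d * (α * s ^ (α - 1)) < 0 :=
      mul_neg_of_pos_of_neg hdpos (mul_neg_of_neg_of_pos hα0 h1)
    exact mul_pos (mul_pos_of_neg_of_neg h3 hβ0) h2
  -- the exponent identities
  have hexp1 : (α - 1) * (p - 1) = 1 - N := by
    rw [hα]; field_simp; ring
  have hexp2 : γ - 1 = β * q := by
    rw [hγ, hβ]; field_simp; ring
  have hexpθ : (1 - N) + (α - 1) = θ := by
    rw [hα, hθ]; field_simp; ring
  -- the sign * abs function equals a clean power function on (0, ∞)
  have hF : ∀ s : ℝ, 0 < s →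
      Real.sign (deriv (fun x : ℝ => (c + d * x ^ α) ^ β) s)
          * |deriv (fun x : ℝ => (c + d * x ^ α) ^ β) s| ^ (p - 1)
        = K ^ (p - 1) * s ^ (1 - N) * (c + d * s ^ α) ^ γ := by
    intro s hs
    have hD := hDpos s hs
    rw [hDval s hs, Real.sign_of_pos hD, abs_of_pos hD, one_mul]
    have hrw : d * (α * s ^ (α - 1)) * β * (c + d * s ^ α) ^ (β - 1)
        = K * s ^ (α - 1) * (c + d * s ^ α) ^ (β - 1) := by rw [hK]; ring
    rw [hrw]
    have hx1 : (0:ℝ) ≤ K * s ^ (α - 1) :=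
      le_of_lt (mul_pos hKpos (Real.rpow_pos_of_pos hs _))
    rw [Real.mul_rpow hx1 (le_of_lt (Real.rpow_pos_of_pos (hA s hs) _)),
      Real.mul_rpow (le_of_lt hKpos) (le_of_lt (Real.rpow_pos_of_pos hs _)),
      ← Real.rpow_mul (le_of_lt hs), ← Real.rpow_mul (le_of_lt (hA s hs)), hexp1, ← hγ]
  -- positivity of u
  have hupos : 0 < (c + d * r ^ α) ^ β := Real.rpow_pos_of_pos hAr β
  refine ⟨hupos, ?_⟩
  -- derivative of the flux function
  have hφ : HasDerivAt (fun s : ℝ => K ^ (p - 1) * s ^ (1 - N) * (c + d * s ^ α) ^ γ)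
      (K ^ (p - 1) * ((1 - N) * r ^ (1 - N - 1) * (c + d * r ^ α) ^ γ
        + r ^ (1 - N) * (d * (α * r ^ (α - 1)) * γ * (c + d * r ^ α) ^ (γ - 1)))) r := by
    have h1 : HasDerivAt (fun s : ℝ => s ^ (1 - N)) ((1 - N) * r ^ (1 - N - 1)) r :=
      Real.hasDerivAt_rpow_const (Or.inl (ne_of_gt hr))
    have h2 : HasDerivAt (fun s : ℝ => (c + d * s ^ α) ^ γ)
        (d * (α * r ^ (α - 1)) * γ * (c + d * r ^ α) ^ (γ - 1)) r :=
      (((Real.hasDerivAt_rpow_const (Or.inl (ne_of_gt hr))).const_mul d).const_add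
        c).rpow_const (Or.inl (ne_of_gt hAr))
    have h3 := (h1.mul h2).const_mul (K ^ (p - 1))
    have hfe : (fun y : ℝ => K ^ (p - 1) * (y ^ (1 - N) * (c + d * y ^ α) ^ γ))
        = fun s : ℝ => K ^ (p - 1) * s ^ (1 - N) * (c + d * s ^ α) ^ γ := by
      funext y; ring
    simp only [Pi.mul_apply] at h3
    rw [hfe] at h3
    exact h3
  -- rewrite the messy derivative value into a clean form
  have hder2 : r ^ (1 - N) * r ^ (α - 1) = r ^ θ := by
    rw [← Real.rpow_add hr, hexpθ]
  have hder3 : (c + d * r ^ α) ^ (γ - 1) = (c + d * r ^ α) ^ (β * q) := by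
    rw [hexp2]
  have hclean : K ^ (p - 1) * ((1 - N) * r ^ (1 - N - 1) * (c + d * r ^ α) ^ γ
        + r ^ (1 - N) * (d * (α * r ^ (α - 1)) * γ * (c + d * r ^ α) ^ (γ - 1)))
      = K ^ (p - 1) * ((1 - N) * r ^ (1 - N - 1) * (c + d * r ^ α) ^ γ
        + (d * α * γ) * (r ^ (1 - N) * r ^ (α - 1)) * (c + d * r ^ α) ^ (γ - 1)) := by
    ring
  -- deriv of the goal's function equals deriv of φ
  have heq : deriv (fun s : ℝ => Real.sign (deriv (fun x : ℝ => (c + d * x ^ α) ^ β) s)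
        * |deriv (fun x : ℝ => (c + d * x ^ α) ^ β) s| ^ (p - 1)) r
      = deriv (fun s : ℝ => K ^ (p - 1) * s ^ (1 - N) * (c + d * s ^ α) ^ γ) r := by
    apply Filter.EventuallyEq.deriv_eq
    filter_upwards [Ioi_mem_nhds hr] with s hs
    exact hF s hs
  -- coefficient identity
  have hKm : K = m ^ (1 / p) := by
    have hs1 : d0 * α * β = 1 := by
      rw [hd0, hα, hβ]; field_simp; ring
    calc K = (d0 * α * β) * m ^ (1 / p) := by rw [hK, hd]; ring
    _ = m ^ (1 / p) := by rw [hs1, one_mul]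
  have hdαγ : d * α * γ = m ^ (1 / p) * m ^ (-1 : ℝ) := by
    have hs2 : d0 * α * γ = 1 / m := by
      rw [hd0, hα, hγ, hβ, hm]; field_simp; ring
    calc d * α * γ = (d0 * α * γ) * m ^ (1 / p) := by rw [hd]; ring
    _ = m ^ (1 / p) * m ^ (-1 : ℝ) := by
        rw [hs2, Real.rpow_neg_one]; field_simp
  have hcoef : K ^ (p - 1) * (d * α * γ) = 1 := by
    rw [hKm, hdαγ, ← Real.rpow_add hm0, ← Real.rpow_mul hm0.le, ← Real.rpow_add hm0]
    rw [show 1 / p * (p - 1) + (1 / p + -1) = 0 by field_simp; ring]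
    exact Real.rpow_zero m
  -- assemble
  rw [heq, hφ.deriv, hclean, hder2, hder3, hF r hr,
    show ((c + d * r ^ α) ^ β) ^ q = (c + d * r ^ α) ^ (β * q) from
      (Real.rpow_mul hAr.le β q).symm,
    show r ^ (1 - N - 1) = r ^ (-N) from by rw [show (1:ℝ) - N - 1 = -N by ring],
    show r ^ (1 - N) = r * r ^ (-N) from by
      rw [show (1:ℝ) - N = 1 + -N by ring, Real.rpow_add hr, Real.rpow_one]]
  have hrinv : r * r⁻¹ = 1 := mul_inv_cancel₀ hr.ne'
  linear_combination (-(r ^ θ * (c + d * r ^ α) ^ (β * q))) * hcoef - ((N - 1) * K ^ (p - 1) * r ^ (-N) * (c + d * r ^ α) ^ γ) * hrinv
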